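/- Let M = B(H₂) where H₂ is a two-dimensional Hilbert space, and let (p_γ)_{γ∈Γ} be a net of projections in M that order converges to a projection p in the poset (M_sa¹, ≤) of self-adjoint contractions. Then (p_γ) is eventually constant equal to p. -/

import Mathlib

open ContinuousLinearMap RCLike
open scoped InnerProductSpace

section ops
variable {H : Type*} [NormedAddCommGroup H] [InnerProductSpace ℂ H] [CompleteSpace H]

local notation "A" => H →L[ℂ] H

lemma inner_le_of_le {a b : A} (h : a ≤ b) (x : H) :
    re ⟪a x, x⟫_ℂ ≤ re ⟪b x, x⟫_ℂ := by
  have := ((le_def a b).1 h).2 x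
  rw [reApplyInnerSelf_apply] at this
  simp only [sub_apply, inner_sub_left, map_sub] at this
  linarith

lemma le_of_inner_le {a b : A} (hab : IsSelfAdjoint (b - a))
    (h : ∀ x, re ⟪a x, x⟫_ℂ ≤ re ⟪b x, x⟫_ℂ) : a ≤ b := by
  refine (le_def a b).2 ⟨ContinuousLinearMap.isSelfAdjoint_iff_isSymmetric.1 hab, fun x => ?_⟩
  rw [reApplyInnerSelf_apply]
  simp only [sub_apply, inner_sub_left, map_sub]
  linarith [h x]

lemma proj_inner {v : A} (hi : IsIdempotentElem v) (hs : IsSelfAdjoint v) (x : H) :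
    re ⟪v x, x⟫_ℂ = ‖v x‖ ^ 2 := by
  have hadj : ContinuousLinearMap.adjoint v = v := hs
  have h1 : v (v x) = v x := by
    conv_rhs => rw [← hi]
    rfl
  have h2 : ⟪v (v x), x⟫_ℂ = ⟪v x, v x⟫_ℂ := hs.isSymmetric (v x) x
  calc re ⟪v x, x⟫_ℂ = re ⟪v (v x), x⟫_ℂ := by rw [h1]
    _ = re ⟪v x, v x⟫_ℂ := by rw [h2]
    _ = ‖v x‖ ^ 2 := by rw [inner_self_eq_norm_sq]

lemma proj_nonneg {v : A} (hi : IsIdempotentElem v) (hs : IsSelfAdjoint v) : (0 : A) ≤ v := by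
  refine le_of_inner_le (by simpa using hs) fun x => ?_
  rw [proj_inner hi hs x]
  simp [sq_nonneg]

lemma proj_apply_norm_le {v : A} (hi : IsIdempotentElem v) (hs : IsSelfAdjoint v) (x : H) :
    ‖v x‖ ≤ ‖x‖ := by
  rcases eq_or_ne (v x) 0 with h | h
  · simp [h]
  · have h1 : ‖v x‖ ^ 2 = re ⟪v x, x⟫_ℂ := (proj_inner hi hs x).symm
    have h2 : re ⟪v x, x⟫_ℂ ≤ ‖v x‖ * ‖x‖ := by
      calc re ⟪v x, x⟫_ℂ ≤ ‖⟪v x, x⟫_ℂ‖ := by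
            exact RCLike.re_le_norm _
        _ ≤ ‖v x‖ * ‖x‖ := norm_inner_le_norm _ _
    have h3 : 0 < ‖v x‖ := norm_pos_iff.2 h
    nlinarith [h1, h2, h3]

lemma sa_le_one {z : A} (hs : IsSelfAdjoint z) (hn : ‖z‖ ≤ 1) : z ≤ (1 : A) := by
  refine le_of_inner_le ((IsSelfAdjoint.one (R := A)).sub hs) fun x => ?_
  have h1 : re ⟪z x, x⟫_ℂ ≤ ‖z x‖ * ‖x‖ := by
    calc re ⟪z x, x⟫_ℂ ≤ ‖⟪z x, x⟫_ℂ‖ := RCLike.re_le_norm _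
      _ ≤ ‖z x‖ * ‖x‖ := norm_inner_le_norm _ _
  have h2 : ‖z x‖ ≤ ‖x‖ := by
    calc ‖z x‖ ≤ ‖z‖ * ‖x‖ := le_opNorm z x
      _ ≤ 1 * ‖x‖ := by nlinarith [norm_nonneg x]
      _ = ‖x‖ := one_mul _
  have h3 : re ⟪(1 : A) x, x⟫_ℂ = ‖x‖ ^ 2 := by
    simp [inner_self_eq_norm_sq]
    rw [← Complex.ofReal_pow, Complex.ofReal_re]
  rw [h3]
  nlinarith [norm_nonneg x, norm_nonneg (z x)]


lemma pos_apply_eq_zero {w : A} (hw : (0 : A) ≤ w) (x : H)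
    (hx : re ⟪w x, x⟫_ℂ ≤ 0) : w x = 0 := by
  have hpos : w.IsPositive := by
    have := (ContinuousLinearMap.le_def 0 w).1 hw
    simpa using this
  have hsym := hpos.1
  by_contra hne
  have hK : (0:ℝ) < ‖w x‖ ^ 2 := by
    have := norm_pos_iff.2 hne
    positivity
  set K : ℝ := ‖w x‖ ^ 2 with hKdef
  set R : ℝ := re ⟪w (w x), w x⟫_ℂ with hR
  have hR0 : 0 ≤ R := by
    have := hpos.2 (w x); rwa [reApplyInnerSelf_apply] at this
  have key : ∀ s : ℝ, 0 ≤ re ⟪w x, x⟫_ℂ + 2 * s * K + s ^ 2 * R := by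
    intro s
    have h := hpos.2 (x + (s:ℂ) • w x)
    rw [reApplyInnerSelf_apply] at h
    have hexp : ⟪w (x + (s:ℂ) • w x), x + (s:ℂ) • w x⟫_ℂ
        = ⟪w x, x⟫_ℂ + (s:ℂ) * ⟪w x, w x⟫_ℂ + ((starRingEnd ℂ) (s:ℂ)) * ⟪w (w x), x⟫_ℂ
          + ((starRingEnd ℂ) (s:ℂ)) * ((s:ℂ) * ⟪w (w x), w x⟫_ℂ) := by
      rw [map_add, map_smul]
      simp only [inner_add_left, inner_add_right, inner_smul_left, inner_smul_right]
      ring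
    have hsw : ⟪w (w x), x⟫_ℂ = ⟪w x, w x⟫_ℂ := hsym (w x) x
    rw [hexp, hsw, Complex.conj_ofReal] at h
    have hww : ⟪w x, w x⟫_ℂ = ((K : ℝ) : ℂ) := by
      rw [inner_self_eq_norm_sq_to_K]; norm_num [hKdef]
    rw [hww] at h
    simp only [map_add, RCLike.re_to_complex, Complex.mul_re, Complex.ofReal_re,
      Complex.ofReal_im, zero_mul, sub_zero, mul_zero] at h
    rw [hR]
    simp only [RCLike.re_to_complex]
    nlinarith [h]
  have hx0 : re ⟪w x, x⟫_ℂ = 0 := by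
    have := hpos.2 x; rw [reApplyInnerSelf_apply] at this; linarith
  set s : ℝ := -(K / (R + 1)) with hs
  have hR1 : (0:ℝ) < R + 1 := by linarith
  have h2 : 0 ≤ 2 * s * K + s ^ 2 * R := by
    have := key s; rw [hx0] at this; linarith
  have hsR : s * (R + 1) = -K := by
    rw [hs, neg_mul, div_mul_cancel₀ _ hR1.ne']
  have h6 : 0 ≤ 2*s*K*((R+1)*(R+1)) + s^2*R*((R+1)*(R+1)) := by
    nlinarith [h2, mul_pos hR1 hR1]
  have h7 : 2*s*K*((R+1)*(R+1)) = 2*K*(-K)*(R+1) := by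
    rw [← hsR]; ring
  have h8 : s^2*R*((R+1)*(R+1)) = R*(-K)*(-K) := by
    rw [← hsR]; ring
  rw [h7, h8] at h6
  nlinarith [mul_pos hK (show (0:ℝ) < R + 2 by linarith), hK, hR0]


-- a projection fixes elements of its range
lemma proj_fix {v : A} (hi : IsIdempotentElem v) {x : H}
    (hx : x ∈ LinearMap.range (v : H →ₗ[ℂ] H)) : v x = x := by
  obtain ⟨u, rfl⟩ := hx
  show v (v u) = v u
  conv_lhs => rw [← ContinuousLinearMap.mul_apply, hi]

lemma proj_eq_of_range_eq {a b : A}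
    (hai : IsIdempotentElem a) (has : IsSelfAdjoint a)
    (hbi : IsIdempotentElem b) (hbs : IsSelfAdjoint b)
    (h : LinearMap.range (a : H →ₗ[ℂ] H) = LinearMap.range (b : H →ₗ[ℂ] H)) : a = b := by
  ext u
  have h1 : b (a u) = a u := proj_fix hbi (h ▸ LinearMap.mem_range_self _ u)
  have h2 : b (u - a u) = 0 := by
    rw [← inner_self_eq_zero (𝕜 := ℂ)]
    have hb2 : ⟪b (u - a u), b (u - a u)⟫_ℂ = ⟪u - a u, b (b (u - a u))⟫_ℂ :=
      hbs.isSymmetric _ _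
    have hbb : b (b (u - a u)) ∈ LinearMap.range (a : H →ₗ[ℂ] H) := by
      rw [h]; exact LinearMap.mem_range_self _ _
    obtain ⟨d, hd⟩ := hbb
    rw [ContinuousLinearMap.coe_coe] at hd
    rw [hb2, ← hd]
    have : ⟪u - a u, a d⟫_ℂ = ⟪a (u - a u), d⟫_ℂ := (has.isSymmetric _ _).symm
    rw [this]
    have : a (u - a u) = 0 := by
      rw [map_sub]
      have : a (a u) = a u := proj_fix hai (LinearMap.mem_range_self _ u)
      rw [this, sub_self]
    rw [this, inner_zero_left]
  have : b u = b (a u) + b (u - a u) := by rw [← map_add]; congr 1; abel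
  rw [this, h1, h2, add_zero]

lemma proj_eq_one_of_range_top {v : A} (hi : IsIdempotentElem v)
    (h : LinearMap.range (v : H →ₗ[ℂ] H) = ⊤) : v = 1 := by
  ext u
  have : v u = u := proj_fix hi (h ▸ Submodule.mem_top)
  simpa using this

lemma finrank_range_proj (hdim : Module.finrank ℂ H = 2) {v : A}
    (hi : IsIdempotentElem v) (hv0 : v ≠ 0) (hv1 : v ≠ 1) :
    Module.finrank ℂ (LinearMap.range (v : H →ₗ[ℂ] H)) = 1 := by
  haveI : FiniteDimensional ℂ H := FiniteDimensional.of_finrank_eq_succ (n := 1) hdim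
  set Rv := LinearMap.range (v : H →ₗ[ℂ] H)
  have hle : Module.finrank ℂ Rv ≤ 2 := hdim ▸ Submodule.finrank_le Rv
  have hne0 : Module.finrank ℂ Rv ≠ 0 := by
    intro h0
    apply hv0
    have hbot : Rv = ⊥ := Submodule.finrank_eq_zero.1 h0
    ext u
    have : v u ∈ Rv := LinearMap.mem_range_self _ u
    rw [hbot] at this
    simpa using this
  have hne2 : Module.finrank ℂ Rv ≠ 2 := by
    intro h2
    exact hv1 (proj_eq_one_of_range_top hi
      (Submodule.eq_top_of_finrank_eq (by rw [h2, hdim])))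
  omega

lemma key_fact (hdim : Module.finrank ℂ H = 2) {z a b : A}
    (hzs : IsSelfAdjoint z) (hzn : ‖z‖ ≤ 1)
    (hai : IsIdempotentElem a) (has : IsSelfAdjoint a) (ha0 : a ≠ 0) (ha1 : a ≠ 1)
    (hbi : IsIdempotentElem b) (hbs : IsSelfAdjoint b) (hb0 : b ≠ 0) (hb1 : b ≠ 1)
    (hab : a ≠ b) (haz : a ≤ z) (hbz : b ≤ z) : z = 1 := by
  haveI : FiniteDimensional ℂ H := FiniteDimensional.of_finrank_eq_succ (n := 1) hdim
  have hz1 : z ≤ 1 := sa_le_one hzs hzn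
  have hw : (0 : A) ≤ 1 - z := by
    have := (ContinuousLinearMap.le_def z 1).1 hz1
    exact (ContinuousLinearMap.le_def 0 (1 - z)).2 (by simpa using this)
  -- (1 - z) kills the ranges of a and b
  have hkill : ∀ (c : A), IsIdempotentElem c → IsSelfAdjoint c → c ≤ z →
      ∀ u, (1 - z) (c u) = 0 := by
    intro c hci hcs hcz u
    apply pos_apply_eq_zero hw
    have h1 : re ⟪c (c u), c u⟫_ℂ ≤ re ⟪z (c u), c u⟫_ℂ := inner_le_of_le hcz (c u)
    have h2 : c (c u) = c u := proj_fix hci (LinearMap.mem_range_self _ u)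
    rw [h2] at h1
    have h3 : re ⟪(1 - z) (c u), c u⟫_ℂ = re ⟪c u, c u⟫_ℂ - re ⟪z (c u), c u⟫_ℂ := by
      simp only [sub_apply, one_apply, inner_sub_left, map_sub]
      rfl
    rw [h3]
    linarith
  -- ranges are distinct lines spanning H
  have hra : Module.finrank ℂ (LinearMap.range (a : H →ₗ[ℂ] H)) = 1 :=
    finrank_range_proj hdim hai ha0 ha1
  have hrb : Module.finrank ℂ (LinearMap.range (b : H →ₗ[ℂ] H)) = 1 :=
    finrank_range_proj hdim hbi hb0 hb1
  set Ra := LinearMap.range (a : H →ₗ[ℂ] H)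
  set Rb := LinearMap.range (b : H →ₗ[ℂ] H)
  have hRne : Ra ≠ Rb := fun h => hab (proj_eq_of_range_eq hai has hbi hbs h)
  have hinf : Ra ⊓ Rb = ⊥ := by
    by_contra hbot
    have h1 : 1 ≤ Module.finrank ℂ ↥(Ra ⊓ Rb) := by
      rw [Nat.one_le_iff_ne_zero]
      intro h0
      exact hbot (Submodule.finrank_eq_zero.1 h0)
    have hia : Ra ⊓ Rb = Ra :=
      Submodule.eq_of_le_of_finrank_le inf_le_left (by omega)
    have hib : Ra ⊓ Rb = Rb :=
      Submodule.eq_of_le_of_finrank_le inf_le_right (by omega)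
    exact hRne (hia ▸ hib)
  have hsup : Ra ⊔ Rb = ⊤ := by
    apply Submodule.eq_top_of_finrank_eq
    have := Submodule.finrank_sup_add_finrank_inf_eq Ra Rb
    rw [hinf] at this
    simp only [finrank_bot] at this
    omega
  have hzero : (1 - z) = 0 := by
    ext u
    rw [ContinuousLinearMap.zero_apply]
    have hu : u ∈ Ra ⊔ Rb := hsup ▸ Submodule.mem_top
    obtain ⟨s, hs, t, ht, rfl⟩ := Submodule.mem_sup.1 hu
    obtain ⟨s₁, hs₁⟩ := hs
    obtain ⟨t₁, ht₁⟩ := ht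
    rw [ContinuousLinearMap.coe_coe] at hs₁ ht₁
    have h1 := hkill a hai has haz s₁
    have h2 := hkill b hbi hbs hbz t₁
    rw [map_add, ← hs₁, ← ht₁, h1, h2, add_zero]
  have := sub_eq_zero.1 hzero
  exact this.symm


variable (bas : OrthonormalBasis (Fin 2) ℂ H)

noncomputable def Tfun (w : A) : ℝ := re ⟪w (bas 0), bas 0⟫_ℂ + re ⟪w (bas 1), bas 1⟫_ℂ

lemma Tfun_mono {a b : A} (h : a ≤ b) : Tfun bas a ≤ Tfun bas b := by
  unfold Tfun
  have h1 := inner_le_of_le h (bas 0)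
  have h2 := inner_le_of_le h (bas 1)
  linarith

lemma Tfun_one : Tfun bas (1 : A) = 2 := by
  unfold Tfun
  have h0 : re ⟪(1:A) (bas 0), bas 0⟫_ℂ = 1 := by
    simp [inner_self_eq_norm_sq, bas.orthonormal.1 0]
  have h1 : re ⟪(1:A) (bas 1), bas 1⟫_ℂ = 1 := by
    simp [inner_self_eq_norm_sq, bas.orthonormal.1 1]
  rw [h0, h1]; norm_num

lemma parseval_two (x : H) : ‖⟪x, bas 0⟫_ℂ‖ ^ 2 + ‖⟪x, bas 1⟫_ℂ‖ ^ 2 = ‖x‖ ^ 2 := by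
  have h := bas.sum_inner_mul_inner x x
  rw [Fin.sum_univ_two] at h
  have e : ∀ i : Fin 2, ⟪x, bas i⟫_ℂ * ⟪bas i, x⟫_ℂ = (‖⟪x, bas i⟫_ℂ‖ ^ 2 : ℝ) := by
    intro i
    rw [← inner_conj_symm (bas i) x, Complex.mul_conj]
    norm_cast
    rw [Complex.normSq_eq_norm_sq]
  rw [e 0, e 1] at h
  have hre := congrArg Complex.re h
  simp only [Complex.add_re, Complex.ofReal_re] at hre
  have hxx : (⟪x, x⟫_ℂ).re = ‖x‖ ^ 2 := by
    rw [← RCLike.re_to_complex]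
    exact inner_self_eq_norm_sq x
  rw [hxx] at hre
  exact hre
  
lemma Tfun_proj_le_one {v : A} (hi : IsIdempotentElem v) (hs : IsSelfAdjoint v)
    (hv1 : v ≠ 1) : Tfun bas v ≤ 1 := by
  -- find a unit vector killed by v
  obtain ⟨u, hu⟩ : ∃ u, v u ≠ u := by
    by_contra hc
    push_neg at hc
    exact hv1 (by ext u; simpa using hc u)
  set x0 : H := u - v u with hx0
  have hx0ne : x0 ≠ 0 := sub_ne_zero.2 (fun h => hu h.symm)
  have hvx0 : v x0 = 0 := by
    rw [hx0, map_sub]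
    have : v (v u) = v u := by
      conv_lhs => rw [← ContinuousLinearMap.mul_apply, hi]
    rw [this, sub_self]
  set x : H := ‖x0‖⁻¹ • x0 with hxdef
  have hxnorm : ‖x‖ = 1 := by
    rw [hxdef, norm_smul]
    simp [norm_pos_iff.2 hx0ne, inv_mul_cancel₀ (norm_ne_zero_iff.2 hx0ne)]
  have hvx : v x = 0 := by
    rw [hxdef, ContinuousLinearMap.map_smul_of_tower, hvx0, smul_zero]
  have key : ∀ i : Fin 2, ‖v (bas i)‖ ^ 2 ≤ 1 - ‖⟪x, bas i⟫_ℂ‖ ^ 2 := by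
    intro i
    set c : ℂ := ⟪x, bas i⟫_ℂ with hc
    have h1 : v (bas i) = v (bas i - c • x) := by
      rw [map_sub, map_smul, hvx, smul_zero, sub_zero]
    have h2 : ‖v (bas i - c • x)‖ ≤ ‖bas i - c • x‖ := proj_apply_norm_le hi hs _
    have h3 : ‖bas i - c • x‖ ^ 2 = 1 - ‖c‖ ^ 2 := by
      rw [norm_sub_sq (𝕜 := ℂ)]
      have e1 : re ⟪bas i, c • x⟫_ℂ = ‖c‖ ^ 2 := by
        rw [inner_smul_right]
        have : ⟪bas i, x⟫_ℂ = (starRingEnd ℂ) c := by rw [hc, inner_conj_symm]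
        rw [this, Complex.mul_conj]
        norm_cast
        rw [Complex.normSq_eq_norm_sq]
        exact RCLike.ofReal_re _
      have e2 : ‖c • x‖ ^ 2 = ‖c‖ ^ 2 := by
        rw [norm_smul, hxnorm, mul_one]
      have e3 : ‖bas i‖ = 1 := bas.orthonormal.1 i
      rw [e1, e2, e3]
      ring
    have h4 : ‖v (bas i)‖ ^ 2 ≤ ‖bas i - c • x‖ ^ 2 := by
      rw [h1]
      exact pow_le_pow_left₀ (norm_nonneg _) h2 2
    rw [h3] at h4
    exact h4
  have hT : Tfun bas v = ‖v (bas 0)‖ ^ 2 + ‖v (bas 1)‖ ^ 2 := by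
    unfold Tfun
    rw [proj_inner hi hs, proj_inner hi hs]
  have hP := parseval_two bas x
  rw [hxnorm] at hP
  have k0 := key 0
  have k1 := key 1
  rw [hT]
  nlinarith [hP]


lemma isClosed_sa : IsClosed {w : A | IsSelfAdjoint w} := by
  have heq : {w : A | IsSelfAdjoint w} = {w : A | ContinuousLinearMap.adjoint w = w} := by
    ext w
    simp only [Set.mem_setOf_eq]
    rw [← ContinuousLinearMap.star_eq_adjoint]
    exact Iff.rfl
  rw [heq]
  exact isClosed_eq (ContinuousLinearMap.adjoint (E := H) (F := H) (𝕜 := ℂ)).continuous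
    continuous_id

lemma isClosed_le_op (a : A) : IsClosed {w : A | a ≤ w} := by
  have heq : {w : A | a ≤ w} =
      {w : A | ContinuousLinearMap.adjoint (w - a) = w - a} ∩
        ⋂ x : H, {w : A | 0 ≤ re ⟪(w - a) x, x⟫_ℂ} := by
    ext w
    simp only [Set.mem_setOf_eq, Set.mem_inter_iff, Set.mem_iInter]
    constructor
    · intro h
      have h2 := (ContinuousLinearMap.le_def a w).1 h
      refine ⟨by rw [← ContinuousLinearMap.star_eq_adjoint]; exact ContinuousLinearMap.isSelfAdjoint_iff_isSymmetric.2 h2.1, fun x => ?_⟩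
      have := h2.2 x
      rwa [reApplyInnerSelf_apply] at this
    · rintro ⟨h1, h2⟩
      refine (ContinuousLinearMap.le_def a w).2 ⟨?_, fun x => ?_⟩
      · apply ContinuousLinearMap.isSelfAdjoint_iff_isSymmetric.1
        show star (w - a) = w - a
        rw [ContinuousLinearMap.star_eq_adjoint]
        exact h1
      · rw [reApplyInnerSelf_apply]
        exact h2 x
  rw [heq]
  apply IsClosed.inter
  · exact isClosed_eq
      ((ContinuousLinearMap.adjoint (E := H) (F := H) (𝕜 := ℂ)).continuous.comp
        (continuous_id.sub continuous_const)) (continuous_id.sub continuous_const)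
  · apply isClosed_iInter
    intro x
    apply isClosed_le continuous_const
    have heq2 : (fun w : A => re ⟪(w - a) x, x⟫_ℂ)
        = fun w : A => re ⟪w x, x⟫_ℂ - re ⟪a x, x⟫_ℂ := by
      funext w
      simp [ContinuousLinearMap.sub_apply, inner_sub_left]
    rw [heq2]
    exact (RCLike.continuous_re.comp
      ((Continuous.inner (ContinuousLinearMap.apply ℂ H x).continuous
        continuous_const))).sub continuous_const

lemma Tfun_continuous (bas : OrthonormalBasis (Fin 2) ℂ H) : Continuous (Tfun bas) := by
  unfold Tfun
  exact (RCLike.continuous_re.comp (Continuous.inner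
      (ContinuousLinearMap.apply ℂ H (bas 0)).continuous continuous_const)).add
    (RCLike.continuous_re.comp (Continuous.inner
      (ContinuousLinearMap.apply ℂ H (bas 1)).continuous continuous_const))

end ops

/-- A net `x`, indexed by a set with relation `r`, *order converges* to `l` in a poset if it is
squeezed between an increasing net with supremum `l` and a decreasing net with infimum `l`. -/
def OrderConvNet {ι P : Type*} (r : ι → ι → Prop) [Preorder P] (x : ι → P) (l : P) : Prop :=
  ∃ y z : ι → P,
    (∀ i j, r i j → y i ≤ y j) ∧ (∀ i j, r i j → z j ≤ z i) ∧
    (∀ i, y i ≤ x i ∧ x i ≤ z i) ∧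
    IsLUB (Set.range y) l ∧ IsGLB (Set.range z) l

/-- In `B(H₂)` with `H₂` two-dimensional, a net of projections order converging to a projection
`p` in the poset of self-adjoint contractions is eventually constant equal to `p`. -/
theorem stmt19 {H : Type*} [NormedAddCommGroup H] [InnerProductSpace ℂ H] [CompleteSpace H]
    (hdim : Module.finrank ℂ H = 2)
    (ι : Type*) (r : ι → ι → Prop)
    (hpre : IsPreorder ι r) (hdir : IsDirected ι r) (hne : Nonempty ι)
    (q : ι → H →L[ℂ] H) (hq : ∀ γ, IsIdempotentElem (q γ) ∧ IsSelfAdjoint (q γ))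
    (hqn : ∀ γ, ‖q γ‖ ≤ 1)
    (p : H →L[ℂ] H) (hp : IsIdempotentElem p ∧ IsSelfAdjoint p) (hpn : ‖p‖ ≤ 1)
    (hconv : OrderConvNet r
      (fun γ => (⟨q γ, (hq γ).2, hqn γ⟩ : {a : H →L[ℂ] H // IsSelfAdjoint a ∧ ‖a‖ ≤ 1}))
      ⟨p, hp.2, hpn⟩) :
    ∃ γ₀ : ι, ∀ γ, r γ₀ γ → q γ = p := by
  classical
  obtain ⟨y, z, hymono, hzanti, hyz, hlub, hglb⟩ := hconv
  haveI hFD : FiniteDimensional ℂ H := FiniteDimensional.of_finrank_eq_succ (n := 1) hdim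
  have hrefl : ∀ γ, r γ γ := hpre.refl
  have htrans : ∀ {a b c : ι}, r a b → r b c → r a c := fun h1 h2 => hpre.trans _ _ _ h1 h2
  haveI : IsDirected ι r := hdir
  have hdir2 : ∀ a b : ι, ∃ c, r a c ∧ r b c := fun a b => directed_of r a b
  have hYq : ∀ γ, (y γ : H →L[ℂ] H) ≤ q γ := fun γ => Subtype.coe_le_coe.mpr (hyz γ).1
  have hqZ : ∀ γ, q γ ≤ (z γ : H →L[ℂ] H) := fun γ => Subtype.coe_le_coe.mpr (hyz γ).2
  have hYm : ∀ {i j}, r i j → (y i : H →L[ℂ] H) ≤ (y j : H →L[ℂ] H) :=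
    fun {i j} h => Subtype.coe_le_coe.mpr (hymono i j h)
  have hZa : ∀ {i j}, r i j → (z j : H →L[ℂ] H) ≤ (z i : H →L[ℂ] H) :=
    fun {i j} h => Subtype.coe_le_coe.mpr (hzanti i j h)
  have hYp : ∀ γ, (y γ : H →L[ℂ] H) ≤ p := fun γ => Subtype.coe_le_coe.mpr (hlub.1 (Set.mem_range_self γ))
  have hpZ : ∀ γ, p ≤ (z γ : H →L[ℂ] H) := fun γ => Subtype.coe_le_coe.mpr (hglb.1 (Set.mem_range_self γ))
  -- any cofinally occurring value of the net equals p
  have cof_eq : ∀ e : H →L[ℂ] H, IsSelfAdjoint e → ‖e‖ ≤ 1 →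
      (∀ γ, ∃ γ', r γ γ' ∧ q γ' = e) → e = p := by
    intro e hsa hnorm hco
    have h1 : e ≤ p := by
      have hlbd : (⟨e, hsa, hnorm⟩ : {a : H →L[ℂ] H // IsSelfAdjoint a ∧ ‖a‖ ≤ 1}) ∈ lowerBounds (Set.range z) := by
        rintro s ⟨γ, rfl⟩
        obtain ⟨γ', hg1, hg2⟩ := hco γ
        refine Subtype.coe_le_coe.mp ?_
        show e ≤ (z γ : H →L[ℂ] H)
        calc e = q γ' := hg2.symm
          _ ≤ (z γ' : H →L[ℂ] H) := hqZ γ'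
          _ ≤ (z γ : H →L[ℂ] H) := hZa hg1
      exact Subtype.coe_le_coe.mpr (hglb.2 hlbd)
    have h2 : p ≤ e := by
      have hubd : (⟨e, hsa, hnorm⟩ : {a : H →L[ℂ] H // IsSelfAdjoint a ∧ ‖a‖ ≤ 1}) ∈ upperBounds (Set.range y) := by
        rintro s ⟨γ, rfl⟩
        obtain ⟨γ', hg1, hg2⟩ := hco γ
        refine Subtype.coe_le_coe.mp ?_
        show (y γ : H →L[ℂ] H) ≤ e
        calc (y γ : H →L[ℂ] H) ≤ (y γ' : H →L[ℂ] H) := hYm hg1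
          _ ≤ q γ' := hYq γ'
          _ = e := hg2
      exact Subtype.coe_le_coe.mpr (hlub.2 hubd)
    exact le_antisymm h1 h2
  by_cases hEC : ∃ γ₀, ∀ γ, r γ₀ γ → q γ = q γ₀
  · obtain ⟨γ₀, hg⟩ := hEC
    have hco : ∀ γ, ∃ γ', r γ γ' ∧ q γ' = q γ₀ := by
      intro γ
      obtain ⟨γ', h1, h2⟩ := hdir2 γ γ₀
      exact ⟨γ', h1, hg γ' h2⟩
    have := cof_eq (q γ₀) (hq γ₀).2 (hqn γ₀) hco
    exact ⟨γ₀, fun γ hγ => (hg γ hγ).trans this⟩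
  · exfalso
    push_neg at hEC
    by_cases hzone : ∀ γ, (z γ : H →L[ℂ] H) = 1
    · -- z is constantly 1, hence p = 1; contradiction via trace functional and compactness
      have hp1 : p = 1 := by
        obtain ⟨γ⟩ := hne
        have hple : p ≤ 1 := (hzone γ) ▸ hpZ γ
        have h1n : ‖(1 : H →L[ℂ] H)‖ ≤ 1 := by
          rw [ContinuousLinearMap.one_def]; exact ContinuousLinearMap.norm_id_le
        have hlbd : (⟨1, IsSelfAdjoint.one _, h1n⟩ : {a : H →L[ℂ] H // IsSelfAdjoint a ∧ ‖a‖ ≤ 1}) ∈ lowerBounds (Set.range z) := by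
          rintro s ⟨γ', rfl⟩
          refine Subtype.coe_le_coe.mp ?_
          show (1 : H →L[ℂ] H) ≤ (z γ' : H →L[ℂ] H)
          rw [hzone γ']
        exact le_antisymm hple (Subtype.coe_le_coe.mpr (hglb.2 hlbd))
      have hconot1 : ∀ γ, ∃ γ', r γ γ' ∧ q γ' ≠ 1 := by
        intro γ
        obtain ⟨γ₁, hγ₁, hne1⟩ := hEC γ
        by_cases h : q γ = 1
        · exact ⟨γ₁, hγ₁, fun h1 => hne1 (h1.trans h.symm)⟩
        · exact ⟨γ, hrefl γ, h⟩
      let bas : OrthonormalBasis (Fin 2) ℂ H :=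
        (stdOrthonormalBasis ℂ H).reindex (finCongr hdim)
      have hTy : ∀ γ, Tfun bas (y γ : H →L[ℂ] H) ≤ 1 := by
        intro γ
        obtain ⟨γ', h1, h2⟩ := hconot1 γ
        have h3 := Tfun_mono bas ((hYm h1).trans (hYq γ'))
        exact h3.trans (Tfun_proj_le_one bas (hq γ').1 (hq γ').2 h2)
      letI : Preorder ι :=
        { le := r, le_refl := hrefl, le_trans := fun a b c hab hbc => htrans hab hbc }
      haveI : Filter.NeBot (Filter.atTop : Filter ι) :=
        Filter.atTop_neBot_iff.mpr ⟨hne, hdir⟩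
      haveI : ProperSpace (H →L[ℂ] H) := FiniteDimensional.proper ℂ (H →L[ℂ] H)
      set F := Filter.map (fun γ => (y γ : H →L[ℂ] H)) Filter.atTop with hF
      have hFle : F ≤ Filter.principal (Metric.closedBall (0 : H →L[ℂ] H) 1) := by
        rw [Filter.le_principal_iff, hF, Filter.mem_map]
        apply Filter.univ_mem'
        intro γ
        simp only [Set.mem_preimage, Metric.mem_closedBall, dist_zero_right]
        exact (y γ).2.2
      obtain ⟨m, hmball, hcl⟩ :=
        (isCompact_closedBall (0 : H →L[ℂ] H) 1).exists_clusterPt hFle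
      have hmem_closed : ∀ C : Set (H →L[ℂ] H), IsClosed C →
          (∀ᶠ γ in Filter.atTop, (y γ : H →L[ℂ] H) ∈ C) → m ∈ C := by
        intro C hC hev
        have hCF : C ∈ F := Filter.mem_map.2 hev
        have h2 : ClusterPt m (Filter.principal C) :=
          hcl.mono (Filter.le_principal_iff.2 hCF)
        have h3 : m ∈ closure C := mem_closure_iff_clusterPt.2 h2
        rwa [hC.closure_eq] at h3
      have hub : ∀ γ, (y γ : H →L[ℂ] H) ≤ m := by
        intro γ
        refine hmem_closed _ (isClosed_le_op (y γ : H →L[ℂ] H)) ?_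
        refine Filter.eventually_atTop.2 ⟨γ, fun γ' h => ?_⟩
        exact hYm h
      have hTm : Tfun bas m ≤ 1 :=
        hmem_closed {w | Tfun bas w ≤ 1}
          (isClosed_le (Tfun_continuous bas) continuous_const)
          (Filter.Eventually.of_forall hTy)
      have hmsa : IsSelfAdjoint m :=
        hmem_closed {w | IsSelfAdjoint w} isClosed_sa
          (Filter.Eventually.of_forall fun γ => (y γ).2.1)
      have hmn : ‖m‖ ≤ 1 := by
        simpa only [Metric.mem_closedBall, dist_zero_right] using hmball
      have hpm : p ≤ m := by
        have hubd : (⟨m, hmsa, hmn⟩ : {a : H →L[ℂ] H // IsSelfAdjoint a ∧ ‖a‖ ≤ 1}) ∈ upperBounds (Set.range y) := by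
          rintro s ⟨γ, rfl⟩
          exact Subtype.coe_le_coe.mp (hub γ)
        exact Subtype.coe_le_coe.mpr (hlub.2 hubd)
      rw [hp1] at hpm
      have h2 := Tfun_mono bas hpm
      rw [Tfun_one] at h2
      linarith
    · push_neg at hzone
      obtain ⟨γs, hγs⟩ := hzone
      have hztail : ∀ γ, r γs γ → (z γ : H →L[ℂ] H) ≠ 1 := by
        intro γ h h1
        have h2 : (1 : H →L[ℂ] H) ≤ (z γs : H →L[ℂ] H) := h1 ▸ hZa h
        exact hγs (le_antisymm (sa_le_one (z γs).2.1 (z γs).2.2) h2)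
      have hextract : ∀ γ, ∃ γ0 γ1, r γ γ0 ∧ r γ γ1 ∧ q γ0 = 0 ∧
          (q γ1 ≠ 0 ∧ q γ1 ≠ 1) ∧ r γs γ1 := by
        intro γ
        obtain ⟨γc, hc1, hc2⟩ := hdir2 γ γs
        obtain ⟨γd, hd1, hd2⟩ := hEC γc
        have hzc : (z γc : H →L[ℂ] H) ≠ 1 := hztail γc hc2
        have haz : q γc ≤ (z γc : H →L[ℂ] H) := hqZ γc
        have hbz : q γd ≤ (z γc : H →L[ℂ] H) := (hqZ γd).trans (hZa hd1)
        have hne1c : q γc ≠ 1 := fun h =>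
          hzc (le_antisymm (sa_le_one (z γc).2.1 (z γc).2.2) (h ▸ haz))
        have hne1d : q γd ≠ 1 := fun h =>
          hzc (le_antisymm (sa_le_one (z γc).2.1 (z γc).2.2) (h ▸ hbz))
        by_cases h0c : q γc = 0
        · exact ⟨γc, γd, hc1, htrans hc1 hd1, h0c,
            ⟨fun h => hd2 (h.trans (h0c.symm)), hne1d⟩, htrans hc2 hd1⟩
        · by_cases h0d : q γd = 0
          · exact ⟨γd, γc, htrans hc1 hd1, hc1, h0d, ⟨h0c, hne1c⟩, hc2⟩
          · exact absurd (key_fact hdim (z γc).2.1 (z γc).2.2 (hq γc).1 (hq γc).2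
              h0c hne1c (hq γd).1 (hq γd).2 h0d hne1d (Ne.symm hd2) haz hbz) hzc
      have hp0 : p = 0 := by
        have h0 : (0 : H →L[ℂ] H) = p := by
          refine cof_eq 0 (IsSelfAdjoint.zero _) (by simp) ?_
          intro γ
          obtain ⟨γ0, _, h1, _, h2, _⟩ := hextract γ
          exact ⟨γ0, h1, h2⟩
        exact h0.symm
      obtain ⟨_, γ1s, _, _, _, ⟨hc0, hc1⟩, hcs⟩ := hextract γs
      have hcz : q γ1s ≤ (z γs : H →L[ℂ] H) := (hqZ γ1s).trans (hZa hcs)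
      have hcof : ∀ γ, ∃ γ', r γ γ' ∧ q γ' = q γ1s := by
        intro γ
        obtain ⟨_, γ1, _, h1, _, ⟨h1n0, h1n1⟩, h1s⟩ := hextract γ
        refine ⟨γ1, h1, ?_⟩
        by_contra hnec
        have h2z : q γ1 ≤ (z γs : H →L[ℂ] H) := (hqZ γ1).trans (hZa h1s)
        exact hγs (key_fact hdim (z γs).2.1 (z γs).2.2 (hq γ1).1 (hq γ1).2 h1n0 h1n1
          (hq γ1s).1 (hq γ1s).2 hc0 hc1 hnec h2z hcz)
      have hceq := cof_eq (q γ1s) (hq γ1s).2 (hqn γ1s) hcof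
      rw [hp0] at hceq
      exact hc0 hceq
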